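/- Let G be a cubic graph containing a twin-triangle on v1, v2, v3, v4 (edges (v1,v2),(v2,v3),(v2,v4),(v1,v3),(v3,v4)) with external edges (v1,v5) and (v4,v6), v5 ≠ v6 outside the configuration. Let G' be obtained from G by deleting v1, v2, v3, v4 and adding the edge (v5,v6). Then G is 3-edge-colorable if and only if G' is 3-edge-colorable. -/

import Mathlib

open SimpleGraph

/-- A proper edge coloring: distinct edges of `G` sharing an endpoint get distinct colors. -/
def IsProperEdgeColoring {V : Type*} {α : Type*} (G : SimpleGraph V) (c : Sym2 V → α) : Prop :=
  ∀ e₁ ∈ G.edgeSet, ∀ e₂ ∈ G.edgeSet, e₁ ≠ e₂ → (∃ v, v ∈ e₁ ∧ v ∈ e₂) → c e₁ ≠ c e₂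

/-- A graph is 3-edge-colorable if it admits a proper edge coloring with 3 colors. -/
def ThreeEdgeColorable {V : Type*} (G : SimpleGraph V) : Prop :=
  ∃ c : Sym2 V → Fin 3, IsProperEdgeColoring G c

private def endpts {W : Type*} [DecidableEq W] : Sym2 W → Finset W :=
  Sym2.lift ⟨fun a b => {a, b}, by intro a b; ext x; simp [or_comm]⟩

private lemma mem_endpts {W : Type*} [DecidableEq W] (w : W) (e : Sym2 W) :
    w ∈ endpts e ↔ w ∈ e := by
  induction e using Sym2.ind with
  | _ a b => simp [endpts, Sym2.mem_iff]

private lemma card_endpts {W : Type*} [DecidableEq W] (e : Sym2 W) (h : ¬ e.IsDiag) :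
    (endpts e).card = 2 := by
  induction e using Sym2.ind with
  | _ a b =>
    rw [Sym2.mk_isDiag_iff] at h
    simp only [endpts, Sym2.lift_mk]
    rw [Finset.card_insert_of_notMem (by simp [h]), Finset.card_singleton]

/-- In a graph where all vertices have degree 3 except two vertices `u, v` of degree 2,
any proper 3-edge-coloring misses the same color at `u` and at `v`. -/
private lemma parity_missing {W : Type*} [Fintype W] [DecidableEq W] (H : SimpleGraph W)
    [DecidableRel H.Adj] (u v : W) (huv : u ≠ v)
    (hdeg : ∀ w, w ≠ u → w ≠ v → H.degree w = 3)
    (hu : H.degree u = 2) (hv : H.degree v = 2)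
    (c : Sym2 W → Fin 3) (hc : IsProperEdgeColoring H c)
    (γ : Fin 3) (hγ : ∀ e ∈ H.edgeSet, u ∈ e → c e ≠ γ) :
    ∀ e ∈ H.edgeSet, v ∈ e → c e ≠ γ := by
  set M : Finset (Sym2 W) := {e ∈ H.edgeFinset | c e = γ} with hM
  set cov : Finset W := M.biUnion endpts with hcov
  have hmemM : ∀ e, e ∈ M ↔ e ∈ H.edgeSet ∧ c e = γ := by
    intro e; simp [hM, mem_edgeFinset]
  have hmemcov : ∀ w, w ∈ cov ↔ ∃ e ∈ H.edgeSet, c e = γ ∧ w ∈ e := by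
    intro w
    simp only [hcov, Finset.mem_biUnion, hmemM, mem_endpts]
    tauto
  -- the γ-class is a matching
  have hdisj : ∀ e₁ ∈ M, ∀ e₂ ∈ M, e₁ ≠ e₂ → Disjoint (endpts e₁) (endpts e₂) := by
    intro e₁ h₁ e₂ h₂ hne
    rw [hmemM] at h₁ h₂
    rw [Finset.disjoint_left]
    intro w hw1 hw2
    rw [mem_endpts] at hw1 hw2
    exact hc e₁ h₁.1 e₂ h₂.1 hne ⟨w, hw1, hw2⟩ (h₁.2.trans h₂.2.symm)
  have hcardcov : cov.card = 2 * M.card := by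
    rw [hcov, Finset.card_biUnion hdisj]
    rw [Finset.sum_congr rfl (fun e he => card_endpts e
      (H.not_isDiag_of_mem_edgeSet ((hmemM e).1 he).1))]
    simp [Nat.mul_comm]
  -- every degree-3 vertex is covered
  have hcover3 : ∀ w, H.degree w = 3 → w ∈ cov := by
    intro w hw
    have hinj : Set.InjOn c (H.incidenceFinset w : Set (Sym2 W)) := by
      intro e₁ h₁ e₂ h₂ hce
      by_contra hne
      rw [Finset.mem_coe, mem_incidenceFinset] at h₁ h₂
      exact hc e₁ h₁.1 e₂ h₂.1 hne ⟨w, h₁.2, h₂.2⟩ hce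
    have hcard : ((H.incidenceFinset w).image c).card = 3 := by
      rw [Finset.card_image_of_injOn hinj, card_incidenceFinset_eq_degree, hw]
    have : (H.incidenceFinset w).image c = Finset.univ := by
      apply Finset.eq_univ_of_card
      simp [hcard]
    have hγmem : γ ∈ (H.incidenceFinset w).image c := this ▸ Finset.mem_univ γ
    rw [Finset.mem_image] at hγmem
    obtain ⟨e, he, hce⟩ := hγmem
    rw [mem_incidenceFinset] at he
    exact (hmemcov w).2 ⟨e, he.1, hce, he.2⟩
  -- u not covered
  have hucov : u ∉ cov := by
    rw [hmemcov]
    rintro ⟨e, he, hce, hue⟩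
    exact hγ e he hue hce
  -- counting
  set cubics : Finset W := (Finset.univ.erase u).erase v with hcub
  have hsub1 : cubics ⊆ cov := by
    intro w hw
    rw [hcub, Finset.mem_erase, Finset.mem_erase] at hw
    exact hcover3 w (hdeg w hw.2.1 hw.1)
  have hsub2 : cov ⊆ insert v cubics := by
    intro w hw
    rcases eq_or_ne w v with rfl | hwv
    · exact Finset.mem_insert_self _ _
    rcases eq_or_ne w u with rfl | hwu
    · exact absurd hw hucov
    · exact Finset.mem_insert_of_mem (by rw [hcub]; simp [hwv, hwu])
  have hd : cubics.card = Fintype.card W - 2 := by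
    rw [hcub, Finset.card_erase_of_mem (by simp [huv.symm]), Finset.card_erase_of_mem (by simp)]
    rfl
  -- handshake: cubics.card is even
  have hsum : ∑ w, H.degree w = 2 * H.edgeFinset.card := H.sum_degrees_eq_twice_card_edges
  have hsplit : ∑ w, H.degree w = H.degree u + (H.degree v + ∑ w ∈ cubics, H.degree w) := by
    have h1 : (Finset.univ : Finset W) = insert u (insert v cubics) := by
      ext w
      rw [hcub]
      simp only [Finset.mem_univ, Finset.mem_insert, Finset.mem_erase, true_iff, true_and]
      by_cases h : w = u <;> by_cases h' : w = v <;> simp [h, h']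
    rw [h1, Finset.sum_insert (by rw [hcub]; simp [huv]),
      Finset.sum_insert (by rw [hcub]; simp)]
  have hconst : ∑ w ∈ cubics, H.degree w = 3 * cubics.card := by
    have h3 : ∀ w ∈ cubics, H.degree w = 3 := by
      intro w hw
      rw [hcub, Finset.mem_erase, Finset.mem_erase] at hw
      exact hdeg w hw.2.1 hw.1
    rw [Finset.sum_congr rfl h3, Finset.sum_const, smul_eq_mul, Nat.mul_comm]
  have heven : cubics.card % 2 = 0 := by
    rw [hsplit, hu, hv, hconst] at hsum
    omega
  -- conclude cov = cubics
  have hcovcard : cov.card ≤ cubics.card := by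
    have h1 : cov.card ≤ cubics.card + 1 := by
      calc cov.card ≤ (insert v cubics).card := Finset.card_le_card hsub2
        _ ≤ cubics.card + 1 := Finset.card_insert_le _ _
    have h2 : cubics.card ≤ cov.card := Finset.card_le_card hsub1
    omega
  have hcc : cubics = cov := Finset.eq_of_subset_of_card_le hsub1 hcovcard
  have hvcov : v ∉ cov := by
    rw [← hcc, hcub]; simp
  intro e he hve hce
  exact hvcov ((hmemcov v).2 ⟨e, he, hce, hve⟩)

set_option synthInstance.maxSize 2000 in
set_option maxHeartbeats 1000000 in
private lemma fin3_force (a12 a13 a15 a23 a24 a34 a46 : Fin 3)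
    (h1 : a12 ≠ a13) (h2 : a12 ≠ a15) (h3 : a13 ≠ a15)
    (h4 : a12 ≠ a23) (h5 : a12 ≠ a24) (h6 : a23 ≠ a24)
    (h7 : a13 ≠ a23) (h8 : a13 ≠ a34) (h9 : a23 ≠ a34)
    (h10 : a24 ≠ a34) (h11 : a24 ≠ a46) (h12 : a34 ≠ a46) : a15 = a46 := by
  have H : ∀ a12 a13 a15 a23 a24 a34 a46 : Fin 3,
      ¬(a12 ≠ a13 ∧ a12 ≠ a15 ∧ a13 ≠ a15 ∧ a12 ≠ a23 ∧ a12 ≠ a24 ∧ a23 ≠ a24 ∧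
        a13 ≠ a23 ∧ a13 ≠ a34 ∧ a23 ≠ a34 ∧ a24 ≠ a34 ∧ a24 ≠ a46 ∧ a34 ≠ a46 ∧
        a15 ≠ a46) := by decide
  by_contra hne
  exact H a12 a13 a15 a23 a24 a34 a46
    ⟨h1, h2, h3, h4, h5, h6, h7, h8, h9, h10, h11, h12, hne⟩

set_option maxHeartbeats 4000000 in
/-- Deleting a twin-triangle `v₁,v₂,v₃,v₄` from a cubic graph and joining the two external
neighbors `v₅, v₆` by a new edge preserves 3-edge-colorability in both directions. -/
theorem stmt7 {V : Type*} [Fintype V] [DecidableEq V] (G : SimpleGraph V) [DecidableRel G.Adj]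
    (v₁ v₂ v₃ v₄ v₅ v₆ : V)
    (hcubic : ∀ v, G.degree v = 3)
    (hdist : List.Pairwise (· ≠ ·) [v₁, v₂, v₃, v₄, v₅, v₆])
    (h12 : G.Adj v₁ v₂) (h23 : G.Adj v₂ v₃) (h24 : G.Adj v₂ v₄)
    (h13 : G.Adj v₁ v₃) (h34 : G.Adj v₃ v₄)
    (h15 : G.Adj v₁ v₅) (h46 : G.Adj v₄ v₆) :
    ThreeEdgeColorable G ↔
      ThreeEdgeColorable
        ((SimpleGraph.fromRel (fun a b =>
            (G.Adj a b ∧ a ∉ ({v₁, v₂, v₃, v₄} : Set V) ∧ b ∉ ({v₁, v₂, v₃, v₄} : Set V)) ∨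
            (a = v₅ ∧ b = v₆))).induce
          {x : V | x ∉ ({v₁, v₂, v₃, v₄} : Set V)}) := by
  simp only [List.pairwise_cons, List.mem_cons, List.not_mem_nil, or_false,
    List.mem_singleton, List.Pairwise.nil, and_true, forall_eq_or_imp, forall_eq] at hdist
  obtain ⟨⟨n12, n13, n14, n15, n16⟩, ⟨n23, n24, n25, n26⟩, ⟨n34, n35, n36⟩, ⟨n45, n46⟩, ⟨n56, -⟩⟩ :=
    hdist
  -- determined neighborhoods
  have nbr : ∀ v a b c : V, G.Adj v a → G.Adj v b → G.Adj v c → a ≠ b → a ≠ c → b ≠ c →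
      ∀ x, G.Adj v x → x = a ∨ x = b ∨ x = c := by
    intro v a b c ha hb hc hab hac hbc x hx
    have hsub : ({a, b, c} : Finset V) ⊆ G.neighborFinset v := by
      intro y hy
      simp only [Finset.mem_insert, Finset.mem_singleton] at hy
      rcases hy with rfl | rfl | rfl <;> simpa [SimpleGraph.mem_neighborFinset]
    have hcard : ({a, b, c} : Finset V).card = 3 := by
      rw [Finset.card_insert_of_notMem (by simp [hab, hac]),
        Finset.card_insert_of_notMem (by simp [hbc]), Finset.card_singleton]
    have heq : ({a, b, c} : Finset V) = G.neighborFinset v :=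
      Finset.eq_of_subset_of_card_le hsub
        (by rw [hcard, SimpleGraph.card_neighborFinset_eq_degree, hcubic])
    have : x ∈ G.neighborFinset v := by simpa [SimpleGraph.mem_neighborFinset]
    rw [← heq] at this
    simpa using this
  set S : Set V := {v₁, v₂, v₃, v₄} with hS
  have hmemS : ∀ x, x ∈ S ↔ x = v₁ ∨ x = v₂ ∨ x = v₃ ∨ x = v₄ := by
    intro x; simp [hS]
  have N1 := nbr v₁ v₂ v₃ v₅ h12 h13 h15 n23 n25 n35
  have N2 := nbr v₂ v₁ v₃ v₄ h12.symm h23 h24 n13 n14 n34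
  have N3 := nbr v₃ v₁ v₂ v₄ h13.symm h23.symm h34 n12 n14 n24
  have N4 := nbr v₄ v₂ v₃ v₆ h24.symm h34.symm h46 n23 n26 n36
  have hv5S : v₅ ∉ S := by
    rw [hmemS]; rintro (h | h | h | h)
    exacts [n15 h.symm, n25 h.symm, n35 h.symm, n45 h.symm]
  have hv6S : v₆ ∉ S := by
    rw [hmemS]; rintro (h | h | h | h)
    exacts [n16 h.symm, n26 h.symm, n36 h.symm, n46 h.symm]
  have classify : ∀ a b, G.Adj a b → (a ∉ S ∧ b ∉ S) ∨
      (s(a, b) = s(v₁, v₂) ∨ s(a, b) = s(v₂, v₃) ∨ s(a, b) = s(v₂, v₄) ∨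
        s(a, b) = s(v₁, v₃) ∨ s(a, b) = s(v₃, v₄) ∨ s(a, b) = s(v₁, v₅) ∨
        s(a, b) = s(v₄, v₆)) := by
    have half : ∀ a b, G.Adj a b → a ∈ S →
        s(a, b) = s(v₁, v₂) ∨ s(a, b) = s(v₂, v₃) ∨ s(a, b) = s(v₂, v₄) ∨
        s(a, b) = s(v₁, v₃) ∨ s(a, b) = s(v₃, v₄) ∨ s(a, b) = s(v₁, v₅) ∨
        s(a, b) = s(v₄, v₆) := by
      intro a b hab haS
      rw [hmemS] at haS
      rcases haS with rfl | rfl | rfl | rfl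
      · rcases N1 b hab with rfl | rfl | rfl
        · exact Or.inl rfl
        · exact Or.inr (Or.inr (Or.inr (Or.inl rfl)))
        · exact Or.inr (Or.inr (Or.inr (Or.inr (Or.inr (Or.inl rfl)))))
      · rcases N2 b hab with rfl | rfl | rfl
        · exact Or.inl Sym2.eq_swap
        · exact Or.inr (Or.inl rfl)
        · exact Or.inr (Or.inr (Or.inl rfl))
      · rcases N3 b hab with rfl | rfl | rfl
        · exact Or.inr (Or.inr (Or.inr (Or.inl Sym2.eq_swap)))
        · exact Or.inr (Or.inl Sym2.eq_swap)
        · exact Or.inr (Or.inr (Or.inr (Or.inr (Or.inl rfl))))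
      · rcases N4 b hab with rfl | rfl | rfl
        · exact Or.inr (Or.inr (Or.inl Sym2.eq_swap))
        · exact Or.inr (Or.inr (Or.inr (Or.inr (Or.inl Sym2.eq_swap))))
        · exact Or.inr (Or.inr (Or.inr (Or.inr (Or.inr (Or.inr rfl)))))
    intro a b hab
    by_cases haS : a ∈ S
    · exact Or.inr (half a b hab haS)
    by_cases hbS : b ∈ S
    · right
      rw [show s(a, b) = s(b, a) from Sym2.eq_swap]
      exact half b a hab.symm hbS
    · exact Or.inl ⟨haS, hbS⟩
  have nbr5_out : ∀ x, G.Adj v₅ x → x ≠ v₁ → x ∉ S := by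
    intro x h hx1 hxS
    rw [hmemS] at hxS
    rcases hxS with rfl | rfl | rfl | rfl
    · exact hx1 rfl
    · rcases N2 v₅ h.symm with h' | h' | h'
      exacts [n15 h'.symm, n35 h'.symm, n45 h'.symm]
    · rcases N3 v₅ h.symm with h' | h' | h'
      exacts [n15 h'.symm, n25 h'.symm, n45 h'.symm]
    · rcases N4 v₅ h.symm with h' | h' | h'
      exacts [n25 h'.symm, n35 h'.symm, n56 h']
  have nbr6_out : ∀ x, G.Adj v₆ x → x ≠ v₄ → x ∉ S := by
    intro x h hx4 hxS
    rw [hmemS] at hxS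
    rcases hxS with rfl | rfl | rfl | rfl
    · rcases N1 v₆ h.symm with h' | h' | h'
      exacts [n26 h'.symm, n36 h'.symm, n56 h'.symm]
    · rcases N2 v₆ h.symm with h' | h' | h'
      exacts [n16 h'.symm, n36 h'.symm, n46 h'.symm]
    · rcases N3 v₆ h.symm with h' | h' | h'
      exacts [n16 h'.symm, n26 h'.symm, n46 h'.symm]
    · exact hx4 rfl
  set T : Set V := {x : V | x ∉ S} with hT
  have hmemT : ∀ x, x ∈ T ↔ x ∉ S := fun x => Iff.rfl
  set R : V → V → Prop := fun a b =>
    (G.Adj a b ∧ a ∉ S ∧ b ∉ S) ∨ (a = v₅ ∧ b = v₆) with hR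
  set G' : SimpleGraph T := (SimpleGraph.fromRel R).induce T with hG'
  have hv5T : v₅ ∈ T := hv5S
  have hv6T : v₆ ∈ T := hv6S
  have adj' : ∀ (a b : V) (ha : a ∈ T) (hb : b ∈ T),
      G'.Adj ⟨a, ha⟩ ⟨b, hb⟩ ↔
        (G.Adj a b ∨ (a = v₅ ∧ b = v₆) ∨ (a = v₆ ∧ b = v₅)) := by
    intro a b ha hb
    rw [hmemT] at ha hb
    constructor
    · rintro ⟨hne, (⟨h, -⟩ | ⟨rfl, rfl⟩) | (⟨h, -⟩ | ⟨rfl, rfl⟩)⟩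
      · exact Or.inl h
      · exact Or.inr (Or.inl ⟨rfl, rfl⟩)
      · exact Or.inl h.symm
      · exact Or.inr (Or.inr ⟨rfl, rfl⟩)
    · rintro (h | ⟨rfl, rfl⟩ | ⟨rfl, rfl⟩)
      · exact ⟨h.ne, Or.inl (Or.inl ⟨h, ha, hb⟩)⟩
      · exact ⟨n56, Or.inl (Or.inr ⟨rfl, rfl⟩)⟩
      · exact ⟨n56.symm, Or.inr (Or.inr ⟨rfl, rfl⟩)⟩
  constructor
  · rintro ⟨c, hc⟩
    have key : ∀ a x y, G.Adj a x → G.Adj a y → x ≠ y → c s(a, x) ≠ c s(a, y) := by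
      intro a x y hx hy hxy
      apply hc _ (G.mem_edgeSet.2 hx) _ (G.mem_edgeSet.2 hy)
      · rw [Ne, Sym2.eq_iff]
        rintro (⟨-, h⟩ | ⟨-, h⟩)
        · exact hxy h
        · subst h
          exact G.loopless.irrefl _ hx
      · exact ⟨a, by simp, by simp⟩
    have k1 : c s(v₁, v₂) ≠ c s(v₁, v₃) := key v₁ v₂ v₃ h12 h13 n23
    have k2 : c s(v₁, v₂) ≠ c s(v₁, v₅) := key v₁ v₂ v₅ h12 h15 n25
    have k3 : c s(v₁, v₃) ≠ c s(v₁, v₅) := key v₁ v₃ v₅ h13 h15 n35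
    have k4 : c s(v₁, v₂) ≠ c s(v₂, v₃) := by
      have h := key v₂ v₁ v₃ h12.symm h23 n13
      rwa [show s(v₂, v₁) = s(v₁, v₂) from Sym2.eq_swap] at h
    have k5 : c s(v₁, v₂) ≠ c s(v₂, v₄) := by
      have h := key v₂ v₁ v₄ h12.symm h24 n14
      rwa [show s(v₂, v₁) = s(v₁, v₂) from Sym2.eq_swap] at h
    have k6 : c s(v₂, v₃) ≠ c s(v₂, v₄) := key v₂ v₃ v₄ h23 h24 n34
    have k7 : c s(v₁, v₃) ≠ c s(v₂, v₃) := by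
      have h := key v₃ v₁ v₂ h13.symm h23.symm n12
      rwa [show s(v₃, v₁) = s(v₁, v₃) from Sym2.eq_swap,
        show s(v₃, v₂) = s(v₂, v₃) from Sym2.eq_swap] at h
    have k8 : c s(v₁, v₃) ≠ c s(v₃, v₄) := by
      have h := key v₃ v₁ v₄ h13.symm h34 n14
      rwa [show s(v₃, v₁) = s(v₁, v₃) from Sym2.eq_swap] at h
    have k9 : c s(v₂, v₃) ≠ c s(v₃, v₄) := by
      have h := key v₃ v₂ v₄ h23.symm h34 n24
      rwa [show s(v₃, v₂) = s(v₂, v₃) from Sym2.eq_swap] at h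
    have k10 : c s(v₂, v₄) ≠ c s(v₃, v₄) := by
      have h := key v₄ v₂ v₃ h24.symm h34.symm n23
      rwa [show s(v₄, v₂) = s(v₂, v₄) from Sym2.eq_swap,
        show s(v₄, v₃) = s(v₃, v₄) from Sym2.eq_swap] at h
    have k11 : c s(v₂, v₄) ≠ c s(v₄, v₆) := by
      have h := key v₄ v₂ v₆ h24.symm h46 n26
      rwa [show s(v₄, v₂) = s(v₂, v₄) from Sym2.eq_swap] at h
    have k12 : c s(v₃, v₄) ≠ c s(v₄, v₆) := by
      have h := key v₄ v₃ v₆ h34.symm h46 n36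
      rwa [show s(v₄, v₃) = s(v₃, v₄) from Sym2.eq_swap] at h
    have hkey : c s(v₁, v₅) = c s(v₄, v₆) :=
      fin3_force (c s(v₁, v₂)) (c s(v₁, v₃)) (c s(v₁, v₅)) (c s(v₂, v₃)) (c s(v₂, v₄))
        (c s(v₃, v₄)) (c s(v₄, v₆)) k1 k2 k3 k4 k5 k6 k7 k8 k9 k10 k11 k12
    refine ⟨fun e => if Sym2.map Subtype.val e = s(v₅, v₆) then c s(v₁, v₅)
      else c (Sym2.map Subtype.val e), ?_⟩
    intro e₁
    induction e₁ using Sym2.ind with | _ x y => ?_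
    intro he₁ e₂
    induction e₂ using Sym2.ind with | _ x' y' => ?_
    intro he₂ hne hsh
    obtain ⟨a, ha⟩ := x
    obtain ⟨b, hb⟩ := y
    obtain ⟨a', ha'⟩ := x'
    obtain ⟨b', hb'⟩ := y'
    rw [SimpleGraph.mem_edgeSet, adj' a b ha hb] at he₁
    rw [SimpleGraph.mem_edgeSet, adj' a' b' ha' hb'] at he₂
    obtain ⟨⟨w, hwT⟩, hw1, hw2⟩ := hsh
    simp only [Sym2.mem_iff, Subtype.mk.injEq] at hw1 hw2
    have hneV : s(a, b) ≠ s(a', b') := by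
      intro h
      apply hne
      apply Sym2.map.injective (Subtype.val_injective)
      rwa [Sym2.map_pair_eq, Sym2.map_pair_eq]
    have hwab : w ∈ s(a, b) := by rw [Sym2.mem_iff]; exact hw1
    have hwab' : w ∈ s(a', b') := by rw [Sym2.mem_iff]; exact hw2
    simp only [Sym2.map_pair_eq]
    -- helper : a mixed inequality
    have mixed : ∀ p q : V, p ∉ S → q ∉ S → G.Adj p q → (v₅ ∈ s(p, q) ∨ v₆ ∈ s(p, q)) →
        c s(v₁, v₅) ≠ c s(p, q) := by
      intro p q hp hq hpq hv
      have hne15 : s(v₁, v₅) ≠ s(p, q) := by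
        rw [Ne, Sym2.eq_iff]
        rintro (⟨h, -⟩ | ⟨h, -⟩)
        · exact hp (h ▸ (hmemS v₁).2 (Or.inl rfl))
        · exact hq (h ▸ (hmemS v₁).2 (Or.inl rfl))
      have hne46 : s(v₄, v₆) ≠ s(p, q) := by
        rw [Ne, Sym2.eq_iff]
        rintro (⟨h, -⟩ | ⟨h, -⟩)
        · exact hp (h ▸ (hmemS v₄).2 (Or.inr (Or.inr (Or.inr rfl))))
        · exact hq (h ▸ (hmemS v₄).2 (Or.inr (Or.inr (Or.inr rfl))))
      rcases hv with hv | hv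
      · exact hc _ (G.mem_edgeSet.2 h15) _ (G.mem_edgeSet.2 hpq) hne15
          ⟨v₅, by simp, hv⟩
      · rw [hkey]
        exact hc _ (G.mem_edgeSet.2 h46) _ (G.mem_edgeSet.2 hpq) hne46
          ⟨v₆, by simp, hv⟩
    have adjOf : ∀ p q : V, (G.Adj p q ∨ (p = v₅ ∧ q = v₆) ∨ (p = v₆ ∧ q = v₅)) →
        s(p, q) ≠ s(v₅, v₆) → G.Adj p q := by
      rintro p q (h | ⟨rfl, rfl⟩ | ⟨rfl, rfl⟩) hq
      · exact h
      · exact absurd rfl hq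
      · exact absurd Sym2.eq_swap hq
    by_cases hq1 : s(a, b) = s(v₅, v₆) <;> by_cases hq2 : s(a', b') = s(v₅, v₆)
    · exact absurd (hq1.trans hq2.symm) hneV
    · rw [if_pos hq1, if_neg hq2]
      have hadj2 := adjOf a' b' he₂ hq2
      rw [hq1] at hwab
      rw [Sym2.mem_iff] at hwab
      apply mixed a' b' (by rwa [hmemT] at ha') (by rwa [hmemT] at hb') hadj2
      rcases hwab with rfl | rfl
      · exact Or.inl hwab'
      · exact Or.inr hwab'
    · rw [if_neg hq1, if_pos hq2]
      have hadj1 := adjOf a b he₁ hq1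
      rw [hq2] at hwab'
      rw [Sym2.mem_iff] at hwab'
      refine (mixed a b (by rwa [hmemT] at ha) (by rwa [hmemT] at hb) hadj1 ?_).symm
      rcases hwab' with rfl | rfl
      · exact Or.inl hwab
      · exact Or.inr hwab
    · rw [if_neg hq1, if_neg hq2]
      exact hc _ (G.mem_edgeSet.2 (adjOf a b he₁ hq1)) _
        (G.mem_edgeSet.2 (adjOf a' b' he₂ hq2)) hneV ⟨w, hwab, hwab'⟩
  · rintro ⟨c', hc'⟩
    have m1 : v₁ ∈ S := (hmemS v₁).2 (Or.inl rfl)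
    have m2 : v₂ ∈ S := (hmemS v₂).2 (Or.inr (Or.inl rfl))
    have m3 : v₃ ∈ S := (hmemS v₃).2 (Or.inr (Or.inr (Or.inl rfl)))
    have m4 : v₄ ∈ S := (hmemS v₄).2 (Or.inr (Or.inr (Or.inr rfl)))
    set cext : Sym2 V → Fin 3 :=
      Function.extend (Sym2.map (Subtype.val : T → V)) c' (fun _ => 0) with hcextdef
    have hcext : ∀ e : Sym2 T, cext (Sym2.map Subtype.val e) = c' e := fun e =>
      (Sym2.map.injective Subtype.val_injective).extend_apply c' _ e
    have hcext2 : ∀ (p q : V) (hp : p ∈ T) (hq : q ∈ T),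
        cext s(p, q) = c' s(⟨p, hp⟩, ⟨q, hq⟩) := by
      intro p q hp hq
      have h := hcext s(⟨p, hp⟩, ⟨q, hq⟩)
      rwa [Sym2.map_pair_eq] at h
    set cn : Fin 3 → Sym2 V → Fin 3 := fun t e =>
      if e = s(v₁, v₅) ∨ e = s(v₄, v₆) ∨ e = s(v₂, v₃) then t
      else if e = s(v₁, v₂) ∨ e = s(v₃, v₄) then t + 1
      else if e = s(v₁, v₃) ∨ e = s(v₂, v₄) then t + 2
      else cext e with hcn
    have val15 : ∀ t, cn t s(v₁, v₅) = t := by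
      intro t; simp [hcn]
    have val46 : ∀ t, cn t s(v₄, v₆) = t := by
      intro t; simp [hcn, Sym2.eq_iff, n12, n13, n14, n15, n16, n23, n24, n25, n26, n34, n35, n36, n45, n46, n56, Ne.symm n12, Ne.symm n13, Ne.symm n14, Ne.symm n15, Ne.symm n16, Ne.symm n23, Ne.symm n24, Ne.symm n25, Ne.symm n26, Ne.symm n34, Ne.symm n35, Ne.symm n36, Ne.symm n45, Ne.symm n46, Ne.symm n56]
    have val23 : ∀ t, cn t s(v₂, v₃) = t := by
      intro t; simp [hcn, Sym2.eq_iff, n12, n13, n14, n15, n16, n23, n24, n25, n26, n34, n35, n36, n45, n46, n56, Ne.symm n12, Ne.symm n13, Ne.symm n14, Ne.symm n15, Ne.symm n16, Ne.symm n23, Ne.symm n24, Ne.symm n25, Ne.symm n26, Ne.symm n34, Ne.symm n35, Ne.symm n36, Ne.symm n45, Ne.symm n46, Ne.symm n56]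
    have val12 : ∀ t, cn t s(v₁, v₂) = t + 1 := by
      intro t; simp [hcn, Sym2.eq_iff, n12, n13, n14, n15, n16, n23, n24, n25, n26, n34, n35, n36, n45, n46, n56, Ne.symm n12, Ne.symm n13, Ne.symm n14, Ne.symm n15, Ne.symm n16, Ne.symm n23, Ne.symm n24, Ne.symm n25, Ne.symm n26, Ne.symm n34, Ne.symm n35, Ne.symm n36, Ne.symm n45, Ne.symm n46, Ne.symm n56]
    have val34 : ∀ t, cn t s(v₃, v₄) = t + 1 := by
      intro t; simp [hcn, Sym2.eq_iff, n12, n13, n14, n15, n16, n23, n24, n25, n26, n34, n35, n36, n45, n46, n56, Ne.symm n12, Ne.symm n13, Ne.symm n14, Ne.symm n15, Ne.symm n16, Ne.symm n23, Ne.symm n24, Ne.symm n25, Ne.symm n26, Ne.symm n34, Ne.symm n35, Ne.symm n36, Ne.symm n45, Ne.symm n46, Ne.symm n56]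
    have val13 : ∀ t, cn t s(v₁, v₃) = t + 2 := by
      intro t; simp [hcn, Sym2.eq_iff, n12, n13, n14, n15, n16, n23, n24, n25, n26, n34, n35, n36, n45, n46, n56, Ne.symm n12, Ne.symm n13, Ne.symm n14, Ne.symm n15, Ne.symm n16, Ne.symm n23, Ne.symm n24, Ne.symm n25, Ne.symm n26, Ne.symm n34, Ne.symm n35, Ne.symm n36, Ne.symm n45, Ne.symm n46, Ne.symm n56]
    have val24 : ∀ t, cn t s(v₂, v₄) = t + 2 := by
      intro t; simp [hcn, Sym2.eq_iff, n12, n13, n14, n15, n16, n23, n24, n25, n26, n34, n35, n36, n45, n46, n56, Ne.symm n12, Ne.symm n13, Ne.symm n14, Ne.symm n15, Ne.symm n16, Ne.symm n23, Ne.symm n24, Ne.symm n25, Ne.symm n26, Ne.symm n34, Ne.symm n35, Ne.symm n36, Ne.symm n45, Ne.symm n46, Ne.symm n56]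
    have outNe : ∀ p q u w : V, p ∉ S → q ∉ S → u ∈ S → s(p, q) ≠ s(u, w) := by
      intro p q u w hp hq hu
      rw [Ne, Sym2.eq_iff]
      rintro (⟨h, -⟩ | ⟨-, h⟩)
      · exact hp (by rw [h]; exact hu)
      · exact hq (by rw [h]; exact hu)
    have noA : ∀ p q : V, p ∉ S → q ∉ S →
        ¬(s(p, q) = s(v₁, v₅) ∨ s(p, q) = s(v₄, v₆) ∨ s(p, q) = s(v₂, v₃)) := by
      intro p q hp hq h
      rcases h with h | h | h
      · exact outNe p q v₁ v₅ hp hq m1 h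
      · exact outNe p q v₄ v₆ hp hq m4 h
      · exact outNe p q v₂ v₃ hp hq m2 h
    have noB : ∀ p q : V, p ∉ S → q ∉ S →
        ¬(s(p, q) = s(v₁, v₂) ∨ s(p, q) = s(v₃, v₄)) := by
      intro p q hp hq h
      rcases h with h | h
      · exact outNe p q v₁ v₂ hp hq m1 h
      · exact outNe p q v₃ v₄ hp hq m3 h
    have noC : ∀ p q : V, p ∉ S → q ∉ S →
        ¬(s(p, q) = s(v₁, v₃) ∨ s(p, q) = s(v₂, v₄)) := by
      intro p q hp hq h
      rcases h with h | h
      · exact outNe p q v₁ v₃ hp hq m1 h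
      · exact outNe p q v₂ v₄ hp hq m2 h
    have valOut : ∀ p q : V, p ∉ S → q ∉ S → ∀ t, cn t s(p, q) = cext s(p, q) := by
      intro p q hp hq t
      simp only [hcn]
      rw [if_neg (noA p q hp hq), if_neg (noB p q hp hq), if_neg (noC p q hp hq)]
    have A1 : ∀ s : Fin 3, s ≠ s + 1 := by decide
    have A2 : ∀ s : Fin 3, s ≠ s + 2 := by decide
    have A3 : ∀ s : Fin 3, s + 1 ≠ s + 2 := by decide
    have buildCol : ∀ t : Fin 3,
        (∀ x, G.Adj v₅ x → x ≠ v₁ → cext s(v₅, x) ≠ t) →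
        (∀ x, G.Adj v₆ x → x ≠ v₄ → cext s(v₆, x) ≠ t) →
        IsProperEdgeColoring G (cn t) := by
      intro t H5 H6
      have mixedBack : ∀ p q p' q' w : V, G.Adj p' q' → p' ∉ S → q' ∉ S →
          (s(p, q) = s(v₁, v₂) ∨ s(p, q) = s(v₂, v₃) ∨ s(p, q) = s(v₂, v₄) ∨
            s(p, q) = s(v₁, v₃) ∨ s(p, q) = s(v₃, v₄) ∨ s(p, q) = s(v₁, v₅) ∨
            s(p, q) = s(v₄, v₆)) → w ∈ s(p, q) → w ∈ s(p', q') →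
          cn t s(p, q) ≠ cn t s(p', q') := by
        intro p q p' q' w hadj' hp' hq' D hw1 hw2
        have hwS' : w ∉ S := by
          rw [Sym2.mem_iff] at hw2
          rcases hw2 with rfl | rfl
          exacts [hp', hq']
        rw [valOut p' q' hp' hq']
        have hq'1 : q' ≠ v₁ := fun hh => hq' ((hmemS q').2 (Or.inl hh))
        have hp'1 : p' ≠ v₁ := fun hh => hp' ((hmemS p').2 (Or.inl hh))
        have hq'4 : q' ≠ v₄ := fun hh => hq' ((hmemS q').2 (Or.inr (Or.inr (Or.inr hh))))
        have hp'4 : p' ≠ v₄ := fun hh => hp' ((hmemS p').2 (Or.inr (Or.inr (Or.inr hh))))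
        rcases D with h | h | h | h | h | h | h
        · rw [h, Sym2.mem_iff] at hw1
          rcases hw1 with rfl | rfl
          exacts [absurd m1 hwS', absurd m2 hwS']
        · rw [h, Sym2.mem_iff] at hw1
          rcases hw1 with rfl | rfl
          exacts [absurd m2 hwS', absurd m3 hwS']
        · rw [h, Sym2.mem_iff] at hw1
          rcases hw1 with rfl | rfl
          exacts [absurd m2 hwS', absurd m4 hwS']
        · rw [h, Sym2.mem_iff] at hw1
          rcases hw1 with rfl | rfl
          exacts [absurd m1 hwS', absurd m3 hwS']
        · rw [h, Sym2.mem_iff] at hw1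
          rcases hw1 with rfl | rfl
          exacts [absurd m3 hwS', absurd m4 hwS']
        · -- s(p,q) = s(v₁,v₅)
          rw [h, val15 t]
          rw [h, Sym2.mem_iff] at hw1
          rcases hw1 with rfl | rfl
          · exact absurd m1 hwS'
          · rw [Sym2.mem_iff] at hw2
            rcases hw2 with h5 | h5
            · subst h5
              exact (H5 q' hadj' hq'1).symm
            · subst h5
              rw [show s(p', w) = s(w, p') from Sym2.eq_swap]
              exact (H5 p' hadj'.symm hp'1).symm
        · -- s(p,q) = s(v₄,v₆)
          rw [h, val46 t]
          rw [h, Sym2.mem_iff] at hw1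
          rcases hw1 with rfl | rfl
          · exact absurd m4 hwS'
          · rw [Sym2.mem_iff] at hw2
            rcases hw2 with h6 | h6
            · subst h6
              exact (H6 q' hadj' hq'4).symm
            · subst h6
              rw [show s(p', w) = s(w, p') from Sym2.eq_swap]
              exact (H6 p' hadj'.symm hp'4).symm
      intro e₁
      induction e₁ using Sym2.ind with | _ a b => ?_
      intro he₁ e₂
      induction e₂ using Sym2.ind with | _ a' b' => ?_
      intro he₂ hne hsh
      rw [SimpleGraph.mem_edgeSet] at he₁ he₂
      obtain ⟨w, hw1, hw2⟩ := hsh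
      rcases classify a b he₁ with ⟨haS, hbS⟩ | D1
      · rcases classify a' b' he₂ with ⟨haS', hbS'⟩ | D2
        · -- both outer
          rw [valOut a b haS hbS, valOut a' b' haS' hbS',
            hcext2 a b haS hbS, hcext2 a' b' haS' hbS']
          have hwT : w ∈ T := by
            rw [Sym2.mem_iff] at hw1
            rcases hw1 with rfl | rfl
            exacts [haS, hbS]
          apply hc' _ ?_ _ ?_ ?_ ?_
          · rw [SimpleGraph.mem_edgeSet, adj' a b haS hbS]
            exact Or.inl he₁
          · rw [SimpleGraph.mem_edgeSet, adj' a' b' haS' hbS']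
            exact Or.inl he₂
          · intro h
            apply hne
            have := congrArg (Sym2.map (Subtype.val : T → V)) h
            rwa [Sym2.map_pair_eq, Sym2.map_pair_eq] at this
          · refine ⟨⟨w, hwT⟩, ?_, ?_⟩
            · rw [Sym2.mem_iff] at hw1 ⊢
              rcases hw1 with rfl | rfl
              · exact Or.inl rfl
              · exact Or.inr rfl
            · rw [Sym2.mem_iff] at hw2 ⊢
              rcases hw2 with rfl | rfl
              · exact Or.inl rfl
              · exact Or.inr rfl
        · exact (mixedBack a' b' a b w he₁ haS hbS D2 hw2 hw1).symm
      · rcases classify a' b' he₂ with ⟨haS', hbS'⟩ | D2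
        · exact mixedBack a b a' b' w he₂ haS' hbS' D1 hw1 hw2
        · -- both special
          rcases D1 with h1 | h1 | h1 | h1 | h1 | h1 | h1 <;>
            rcases D2 with h2 | h2 | h2 | h2 | h2 | h2 | h2 <;>
            rw [h1] at hw1 <;> rw [h2] at hw2 <;> rw [h1, h2] at hne <;>
            rw [h1, h2] <;>
            simp only [val12 t, val23 t, val24 t, val13 t, val34 t, val15 t, val46 t] <;>
            first
            | exact absurd rfl hne
            | exact A1 t
            | exact A2 t
            | exact A3 t
            | exact (A1 t).symm
            | exact (A2 t).symm
            | exact (A3 t).symm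
            | (exfalso
               rw [Sym2.mem_iff] at hw1 hw2
               rcases hw1 with rfl | rfl <;> rcases hw2 with h | h <;>
                 first
                 | exact n12 h | exact n13 h | exact n14 h | exact n15 h | exact n16 h
                 | exact n23 h | exact n24 h | exact n25 h | exact n26 h | exact n34 h
                 | exact n35 h | exact n36 h | exact n45 h | exact n46 h | exact n56 h
                 | exact n12 h.symm | exact n13 h.symm | exact n14 h.symm
                 | exact n15 h.symm | exact n16 h.symm | exact n23 h.symm
                 | exact n24 h.symm | exact n25 h.symm | exact n26 h.symm
                 | exact n34 h.symm | exact n35 h.symm | exact n36 h.symm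
                 | exact n45 h.symm | exact n46 h.symm | exact n56 h.symm)
    by_cases hadj : G.Adj v₅ v₆
    · -- v₅ and v₆ adjacent in G: use the parity argument
      haveI : Fintype ↥T := Fintype.ofFinite ↥T
      haveI : DecidableRel G'.Adj := Classical.decRel _
      have third5 : ∃ x₅, G.Adj v₅ x₅ ∧ x₅ ≠ v₁ ∧ x₅ ≠ v₆ := by
        have hcard : (G.neighborFinset v₅).card = 3 := by
          rw [SimpleGraph.card_neighborFinset_eq_degree, hcubic]
        have h1 : v₁ ∈ G.neighborFinset v₅ := by
          rw [SimpleGraph.mem_neighborFinset]; exact h15.symm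
        have h6 : v₆ ∈ (G.neighborFinset v₅).erase v₁ :=
          Finset.mem_erase.2 ⟨n16.symm, by rw [SimpleGraph.mem_neighborFinset]; exact hadj⟩
        have hpos : 0 < (((G.neighborFinset v₅).erase v₁).erase v₆).card := by
          rw [Finset.card_erase_of_mem h6, Finset.card_erase_of_mem h1, hcard]
          norm_num
        obtain ⟨x₅, hx⟩ := Finset.card_pos.1 hpos
        rw [Finset.mem_erase, Finset.mem_erase, SimpleGraph.mem_neighborFinset] at hx
        exact ⟨x₅, hx.2.2, hx.2.1, hx.1⟩
      obtain ⟨x₅, hx5adj, hx51, hx56⟩ := third5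
      have third6 : ∃ x₆, G.Adj v₆ x₆ ∧ x₆ ≠ v₄ ∧ x₆ ≠ v₅ := by
        have hcard : (G.neighborFinset v₆).card = 3 := by
          rw [SimpleGraph.card_neighborFinset_eq_degree, hcubic]
        have h4 : v₄ ∈ G.neighborFinset v₆ := by
          rw [SimpleGraph.mem_neighborFinset]; exact h46.symm
        have h5 : v₅ ∈ (G.neighborFinset v₆).erase v₄ :=
          Finset.mem_erase.2 ⟨n45.symm, by rw [SimpleGraph.mem_neighborFinset]; exact hadj.symm⟩
        have hpos : 0 < (((G.neighborFinset v₆).erase v₄).erase v₅).card := by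
          rw [Finset.card_erase_of_mem h5, Finset.card_erase_of_mem h4, hcard]
          norm_num
        obtain ⟨x₆, hx⟩ := Finset.card_pos.1 hpos
        rw [Finset.mem_erase, Finset.mem_erase, SimpleGraph.mem_neighborFinset] at hx
        exact ⟨x₆, hx.2.2, hx.2.1, hx.1⟩
      obtain ⟨x₆, hx6adj, hx64, hx65⟩ := third6
      have hx5S : x₅ ∉ S := nbr5_out x₅ hx5adj hx51
      have hx6S : x₆ ∉ S := nbr6_out x₆ hx6adj hx64
      have hx5T : x₅ ∈ T := hx5S
      have hx6T : x₆ ∈ T := hx6S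
      have N5 := nbr v₅ v₁ v₆ x₅ h15.symm hadj hx5adj n16 hx51.symm hx56.symm
      have N6 := nbr v₆ v₄ v₅ x₆ h46.symm hadj.symm hx6adj n45 hx64.symm hx65.symm
      have hne56T : (⟨v₅, hv5T⟩ : ↥T) ≠ ⟨v₆, hv6T⟩ := fun h => n56 (congrArg Subtype.val h)
      have nbrT : ∀ w x : V, w ∉ S → w ≠ v₅ → w ≠ v₆ → G.Adj w x → x ∉ S := by
        intro w x hwS hw5 hw6 h hxS
        rw [hmemS] at hxS
        rcases hxS with rfl | rfl | rfl | rfl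
        · rcases N1 w h.symm with rfl | rfl | rfl
          exacts [hwS m2, hwS m3, hw5 rfl]
        · rcases N2 w h.symm with rfl | rfl | rfl
          exacts [hwS m1, hwS m3, hwS m4]
        · rcases N3 w h.symm with rfl | rfl | rfl
          exacts [hwS m1, hwS m2, hwS m4]
        · rcases N4 w h.symm with rfl | rfl | rfl
          exacts [hwS m2, hwS m3, hw6 rfl]
      have hdegw : ∀ w : ↥T, w ≠ ⟨v₅, hv5T⟩ → w ≠ ⟨v₆, hv6T⟩ → G'.degree w = 3 := by
        rintro ⟨w, hwT⟩ hw5 hw6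
        have hw5' : w ≠ v₅ := fun h => hw5 (Subtype.ext h)
        have hw6' : w ≠ v₆ := fun h => hw6 (Subtype.ext h)
        have hwS : w ∉ S := hwT
        have hadjw : ∀ y : ↥T, G'.Adj ⟨w, hwT⟩ y ↔ G.Adj w (y : V) := by
          rintro ⟨y, hyT⟩
          rw [adj' w y hwT hyT]
          constructor
          · rintro (h | ⟨rfl, -⟩ | ⟨rfl, -⟩)
            · exact h
            · exact absurd rfl hw5'
            · exact absurd rfl hw6'
          · exact Or.inl
        rw [← hcubic w, ← SimpleGraph.card_neighborFinset_eq_degree,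
          ← SimpleGraph.card_neighborFinset_eq_degree]
        apply Finset.card_bij (fun (y : ↥T) (_ : y ∈ G'.neighborFinset ⟨w, hwT⟩) => (y : V))
        · intro y hy
          rw [SimpleGraph.mem_neighborFinset] at hy ⊢
          exact (hadjw y).1 hy
        · intro y₁ h₁ y₂ h₂ h
          exact Subtype.ext h
        · intro x hx
          rw [SimpleGraph.mem_neighborFinset] at hx
          refine ⟨⟨x, nbrT w x hwS hw5' hw6' hx⟩, ?_, rfl⟩
          rw [SimpleGraph.mem_neighborFinset]
          exact (hadjw _).2 hx
      have hdeg5 : G'.degree ⟨v₅, hv5T⟩ = 2 := by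
        have hset : G'.neighborFinset ⟨v₅, hv5T⟩ = {⟨v₆, hv6T⟩, ⟨x₅, hx5T⟩} := by
          ext y
          obtain ⟨y, hyT⟩ := y
          rw [SimpleGraph.mem_neighborFinset, adj' v₅ y hv5T hyT]
          constructor
          · rintro (h | ⟨-, rfl⟩ | ⟨h, -⟩)
            · rcases N5 y h with rfl | rfl | rfl
              · exact absurd m1 hyT
              · exact Finset.mem_insert_self _ _
              · exact Finset.mem_insert_of_mem (Finset.mem_singleton_self _)
            · exact Finset.mem_insert_self _ _
            · exact absurd h n56
          · intro hy
            rcases Finset.mem_insert.1 hy with h | h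
            · obtain rfl : y = v₆ := congrArg Subtype.val h
              exact Or.inl hadj
            · obtain rfl : y = x₅ := congrArg Subtype.val (Finset.mem_singleton.1 h)
              exact Or.inl hx5adj
        rw [← SimpleGraph.card_neighborFinset_eq_degree, hset,
          Finset.card_insert_of_notMem
            (fun hh => hx56 (congrArg Subtype.val (Finset.mem_singleton.1 hh)).symm),
          Finset.card_singleton]
      have hdeg6 : G'.degree ⟨v₆, hv6T⟩ = 2 := by
        have hset : G'.neighborFinset ⟨v₆, hv6T⟩ = {⟨v₅, hv5T⟩, ⟨x₆, hx6T⟩} := by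
          ext y
          obtain ⟨y, hyT⟩ := y
          rw [SimpleGraph.mem_neighborFinset, adj' v₆ y hv6T hyT]
          constructor
          · rintro (h | ⟨h, -⟩ | ⟨-, rfl⟩)
            · rcases N6 y h with rfl | rfl | rfl
              · exact absurd m4 hyT
              · exact Finset.mem_insert_self _ _
              · exact Finset.mem_insert_of_mem (Finset.mem_singleton_self _)
            · exact absurd h n56.symm
            · exact Finset.mem_insert_self _ _
          · intro hy
            rcases Finset.mem_insert.1 hy with h | h
            · obtain rfl : y = v₅ := congrArg Subtype.val h
              exact Or.inl hadj.symm
            · obtain rfl : y = x₆ := congrArg Subtype.val (Finset.mem_singleton.1 h)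
              exact Or.inl hx6adj
        rw [← SimpleGraph.card_neighborFinset_eq_degree, hset,
          Finset.card_insert_of_notMem
            (fun hh => hx65 (congrArg Subtype.val (Finset.mem_singleton.1 hh)).symm),
          Finset.card_singleton]
      have hpmem : s((⟨v₅, hv5T⟩ : ↥T), ⟨v₆, hv6T⟩) ∈ G'.edgeSet := by
        rw [SimpleGraph.mem_edgeSet, adj' v₅ v₆ hv5T hv6T]
        exact Or.inl hadj
      have hqmem : s((⟨v₅, hv5T⟩ : ↥T), ⟨x₅, hx5T⟩) ∈ G'.edgeSet := by
        rw [SimpleGraph.mem_edgeSet, adj' v₅ x₅ hv5T hx5T]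
        exact Or.inl hx5adj
      have hpq : c' s((⟨v₅, hv5T⟩ : ↥T), ⟨v₆, hv6T⟩) ≠ c' s((⟨v₅, hv5T⟩ : ↥T), ⟨x₅, hx5T⟩) := by
        apply hc' _ hpmem _ hqmem
        · intro h
          rw [Sym2.eq_iff] at h
          rcases h with ⟨-, h⟩ | ⟨h, -⟩
          · exact hx56 (congrArg Subtype.val h).symm
          · exact hx5adj.ne' (congrArg Subtype.val h).symm
        · exact ⟨⟨v₅, hv5T⟩, Sym2.mem_iff.2 (Or.inl rfl), Sym2.mem_iff.2 (Or.inl rfl)⟩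
      have third : ∀ p q : Fin 3, p ≠ q → -(p + q) ≠ p ∧ -(p + q) ≠ q := by decide
      obtain ⟨ht1, ht2⟩ := third _ _ hpq
      have hγ5 : ∀ e ∈ G'.edgeSet, (⟨v₅, hv5T⟩ : ↥T) ∈ e →
          c' e ≠ -(c' s((⟨v₅, hv5T⟩ : ↥T), ⟨v₆, hv6T⟩) +
            c' s((⟨v₅, hv5T⟩ : ↥T), ⟨x₅, hx5T⟩)) := by
        intro e
        induction e using Sym2.ind with | _ y z => ?_
        intro he hve
        obtain ⟨y, hyT⟩ := y
        obtain ⟨z, hzT⟩ := z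
        rw [SimpleGraph.mem_edgeSet] at he
        have end5 : ∀ (u : V) (huT : u ∈ T), G'.Adj ⟨v₅, hv5T⟩ ⟨u, huT⟩ →
            c' s((⟨v₅, hv5T⟩ : ↥T), ⟨u, huT⟩) ≠ -(c' s((⟨v₅, hv5T⟩ : ↥T), ⟨v₆, hv6T⟩) +
              c' s((⟨v₅, hv5T⟩ : ↥T), ⟨x₅, hx5T⟩)) := by
          intro u huT h
          rw [adj' v₅ u hv5T huT] at h
          have hu : u = v₆ ∨ u = x₅ := by
            rcases h with h | ⟨-, rfl⟩ | ⟨h, -⟩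
            · rcases N5 u h with rfl | rfl | rfl
              · exact absurd m1 huT
              · exact Or.inl rfl
              · exact Or.inr rfl
            · exact Or.inl rfl
            · exact absurd h n56
          rcases hu with rfl | rfl
          · exact Ne.symm ht1
          · exact Ne.symm ht2
        rw [Sym2.mem_iff] at hve
        rcases hve with h | h
        · obtain rfl : v₅ = y := congrArg Subtype.val h
          exact end5 z hzT he
        · obtain rfl : v₅ = z := congrArg Subtype.val h
          rw [show s((⟨y, hyT⟩ : ↥T), (⟨v₅, hzT⟩ : ↥T)) = s((⟨v₅, hzT⟩ : ↥T), ⟨y, hyT⟩) from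
            Sym2.eq_swap]
          exact end5 y hyT he.symm
      have hγ6 := parity_missing G' ⟨v₅, hv5T⟩ ⟨v₆, hv6T⟩ hne56T hdegw hdeg5 hdeg6 c' hc' _ hγ5
      refine ⟨cn (-(c' s((⟨v₅, hv5T⟩ : ↥T), ⟨v₆, hv6T⟩) +
        c' s((⟨v₅, hv5T⟩ : ↥T), ⟨x₅, hx5T⟩))), buildCol _ ?_ ?_⟩
      · intro x hx hx1
        rcases N5 x hx with h | h | h
        · exact absurd h hx1
        · rw [h, hcext2 v₅ v₆ hv5T hv6T]
          exact Ne.symm ht1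
        · rw [h, hcext2 v₅ x₅ hv5T hx5T]
          exact Ne.symm ht2
      · intro x hx hx4
        rcases N6 x hx with h | h | h
        · exact absurd h hx4
        · rw [h, show s(v₆, v₅) = s(v₅, v₆) from Sym2.eq_swap, hcext2 v₅ v₆ hv5T hv6T]
          exact Ne.symm ht1
        · rw [h, hcext2 v₆ x₆ hv6T hx6T]
          apply hγ6
          · rw [SimpleGraph.mem_edgeSet, adj' v₆ x₆ hv6T hx6T]
            exact Or.inl hx6adj
          · exact Sym2.mem_iff.2 (Or.inl rfl)
    · -- v₅ and v₆ not adjacent in G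
      refine ⟨cn (cext s(v₅, v₆)), buildCol _ ?_ ?_⟩
      · intro x hx hx1
        have hxS : x ∉ S := nbr5_out x hx hx1
        have hxv6 : x ≠ v₆ := fun h => hadj (h ▸ hx)
        rw [hcext2 v₅ x hv5T ((hmemT x).2 hxS), hcext2 v₅ v₆ hv5T hv6T]
        apply hc' _ ?_ _ ?_ ?_ ?_
        · rw [SimpleGraph.mem_edgeSet, adj' v₅ x hv5T ((hmemT x).2 hxS)]
          exact Or.inl hx
        · rw [SimpleGraph.mem_edgeSet, adj' v₅ v₆ hv5T hv6T]
          exact Or.inr (Or.inl ⟨rfl, rfl⟩)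
        · intro h
          rw [Sym2.eq_iff] at h
          rcases h with ⟨-, h⟩ | ⟨h, -⟩
          · exact hxv6 (congrArg Subtype.val h)
          · exact n56 (congrArg Subtype.val h)
        · exact ⟨⟨v₅, hv5T⟩, Sym2.mem_iff.2 (Or.inl rfl), Sym2.mem_iff.2 (Or.inl rfl)⟩
      · intro x hx hx4
        have hxS : x ∉ S := nbr6_out x hx hx4
        have hxv5 : x ≠ v₅ := fun h => hadj (h ▸ hx).symm
        rw [hcext2 v₆ x hv6T ((hmemT x).2 hxS), hcext2 v₅ v₆ hv5T hv6T]
        apply hc' _ ?_ _ ?_ ?_ ?_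
        · rw [SimpleGraph.mem_edgeSet, adj' v₆ x hv6T ((hmemT x).2 hxS)]
          exact Or.inl hx
        · rw [SimpleGraph.mem_edgeSet, adj' v₅ v₆ hv5T hv6T]
          exact Or.inr (Or.inl ⟨rfl, rfl⟩)
        · intro h
          rw [Sym2.eq_iff] at h
          rcases h with ⟨h, -⟩ | ⟨-, h⟩
          · exact n56 (congrArg Subtype.val h).symm
          · exact hxv5 (congrArg Subtype.val h)
        · exact ⟨⟨v₆, hv6T⟩, Sym2.mem_iff.2 (Or.inl rfl), Sym2.mem_iff.2 (Or.inr rfl)⟩
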